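/- Let n ≥ 1 and let K : ℝⁿ → ℝ be a continuous function that is integrable and square-integrable, whose Fourier transform \hat K is integrable and satisfies 0 ≤ \hat K(ξ) ≤ 1 for all ξ ∈ ℝⁿ. Then ∫_{ℝⁿ} K(x)² dx ≤ K(0). In particular, for any measurable set B ⊆ ℝⁿ, (1/K(0))·∫_B K(x)² dx ≤ 1 whenever K(0) > 0. -/

import Mathlib

open MeasureTheory Filter Real FourierTransform
open scoped ENNReal Topology ComplexConjugate RealInnerProductSpace

/-- Let `K : ℝⁿ → ℝ` be continuous, integrable and square-integrable, whose
Fourier transform `K̂` is integrable and satisfies `0 ≤ K̂(ξ) ≤ 1` for all `ξ`. Then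
`∫ K² ≤ K 0`, and for any measurable `B`, `(1/K 0) · ∫_B K² ≤ 1` whenever `K 0 > 0`. -/
theorem repulsion_measure_le_one (n : ℕ) (hn : 1 ≤ n)
    (K : EuclideanSpace ℝ (Fin n) → ℝ)
    (hK_cont : Continuous K)
    (hK_int : Integrable K)
    (hK_sq_int : Integrable (fun x => K x ^ 2))
    (Khat : EuclideanSpace ℝ (Fin n) → ℝ)
    (hKhat : ∀ ξ, 𝓕 (fun x => (K x : ℂ)) ξ = (Khat ξ : ℂ))
    (hKhat_int : Integrable Khat)
    (hKhat_nonneg : ∀ ξ, 0 ≤ Khat ξ)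
    (hKhat_le_one : ∀ ξ, Khat ξ ≤ 1) :
    (∫ x, K x ^ 2) ≤ K 0 ∧
      ∀ B : Set (EuclideanSpace ℝ (Fin n)), MeasurableSet B → 0 < K 0 →
        (1 / K 0) * ∫ x in B, K x ^ 2 ≤ 1 := by
  set f : EuclideanSpace ℝ (Fin n) → ℂ := fun x => (K x : ℂ) with hfdef
  set g : EuclideanSpace ℝ (Fin n) → ℂ := fun ξ => (Khat ξ : ℂ) with hgdef
  have h1 : 𝓕 f = g := funext hKhat
  have hf_int : Integrable f := hK_int.ofReal
  have hg_int : Integrable g := hKhat_int.ofReal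
  have hf_cont : Continuous f := Complex.continuous_ofReal.comp hK_cont
  -- Fourier inversion: 𝓕⁻ g = f
  have hinv : 𝓕⁻ g = f := by
    rw [← h1]
    exact hf_cont.fourierInv_fourier_eq hf_int (h1 ▸ hg_int)
  -- g is real valued, so 𝓕 g w = conj (𝓕⁻ g w) = conj (f w) = f w
  have hconj : ∀ w, 𝓕 g w = conj (𝓕⁻ g w) := by
    intro w
    rw [Real.fourier_eq', Real.fourierInv_eq', ← integral_conj]
    congr 1
    ext v
    simp [smul_eq_mul, map_mul, ← Complex.exp_conj, Complex.conj_ofReal, map_ofNat, hgdef]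
  have h𝓕g : ∀ w, 𝓕 g w = f w := by
    intro w
    rw [hconj, hinv, hfdef]
    exact Complex.conj_ofReal _
  -- Parseval: ∫ Khat^2 = ∫ K^2
  have hkey : (∫ ξ, Khat ξ ^ 2 : ℝ) = ∫ x, K x ^ 2 := by
    have hflip := VectorFourier.integral_fourierIntegral_smul_eq_flip
      (L := innerₗ (EuclideanSpace ℝ (Fin n))) (μ := volume) (ν := volume)
      Real.continuous_fourierChar continuous_inner hf_int hg_int
    rw [flip_innerₗ] at hflip
    have lhs : (∫ ξ, (VectorFourier.fourierIntegral 𝐞 volume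
        (innerₗ (EuclideanSpace ℝ (Fin n))) f ξ) • g ξ) = ((∫ ξ, Khat ξ ^ 2 : ℝ) : ℂ) := by
      have e1 : (fun ξ => (VectorFourier.fourierIntegral 𝐞 volume
          (innerₗ (EuclideanSpace ℝ (Fin n))) f ξ) • g ξ)
          = fun ξ => ((Khat ξ ^ 2 : ℝ) : ℂ) := by
        ext ξ
        have h : VectorFourier.fourierIntegral 𝐞 volume
            (innerₗ (EuclideanSpace ℝ (Fin n))) f ξ = 𝓕 f ξ := rfl
        rw [h, h1]
        simp [hgdef, smul_eq_mul, sq]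
      rw [e1]; exact integral_ofReal
    have rhs : (∫ x, f x • (VectorFourier.fourierIntegral 𝐞 volume
        (innerₗ (EuclideanSpace ℝ (Fin n))) g x)) = ((∫ x, K x ^ 2 : ℝ) : ℂ) := by
      have e2 : (fun x => f x • (VectorFourier.fourierIntegral 𝐞 volume
          (innerₗ (EuclideanSpace ℝ (Fin n))) g x))
          = fun x => ((K x ^ 2 : ℝ) : ℂ) := by
        ext x
        have h : VectorFourier.fourierIntegral 𝐞 volume
            (innerₗ (EuclideanSpace ℝ (Fin n))) g x = 𝓕 g x := rfl
        rw [h, h𝓕g x]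
        simp [hfdef, smul_eq_mul, sq]
      rw [e2]; exact integral_ofReal
    rw [lhs, rhs] at hflip
    exact_mod_cast hflip
  -- Khat is continuous
  have hKhat_cont : Continuous Khat := by
    have hc : Continuous (𝓕 f) := VectorFourier.fourierIntegral_continuous
      Real.continuous_fourierChar continuous_inner hf_int
    have : Khat = fun ξ => (𝓕 f ξ).re := by
      ext ξ; rw [hKhat ξ]; simp
    rw [this]
    exact Complex.continuous_re.comp hc
  -- Khat^2 integrable
  have hKhat_sq_int : Integrable (fun ξ => Khat ξ ^ 2) := by
    refine hKhat_int.mono ((hKhat_cont.pow 2).aestronglyMeasurable) ?_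
    filter_upwards with ξ
    rw [Real.norm_eq_abs, Real.norm_eq_abs, abs_of_nonneg (sq_nonneg _),
      abs_of_nonneg (hKhat_nonneg ξ), sq]
    nlinarith [hKhat_nonneg ξ, hKhat_le_one ξ]
  -- ∫ Khat^2 ≤ ∫ Khat
  have hmono : (∫ ξ, Khat ξ ^ 2) ≤ ∫ ξ, Khat ξ := by
    refine integral_mono hKhat_sq_int hKhat_int fun ξ => ?_
    nlinarith [hKhat_nonneg ξ, hKhat_le_one ξ]
  -- K 0 = ∫ Khat
  have h0 : K 0 = ∫ ξ, Khat ξ := by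
    have : (K 0 : ℂ) = ((∫ ξ, Khat ξ : ℝ) : ℂ) := by
      have h2 : 𝓕⁻ g 0 = ∫ v, g v := by
        rw [Real.fourierInv_eq]
        simp
      calc (K 0 : ℂ) = 𝓕⁻ g 0 := by rw [hinv]
        _ = ∫ v, g v := h2
        _ = ((∫ ξ, Khat ξ : ℝ) : ℂ) := integral_ofReal
    exact_mod_cast this
  have main : (∫ x, K x ^ 2) ≤ K 0 := by
    rw [← hkey, h0]; exact hmono
  refine ⟨main, fun B hB hK0 => ?_⟩
  have hsub : (∫ x in B, K x ^ 2) ≤ ∫ x, K x ^ 2 :=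
    setIntegral_le_integral hK_sq_int (Filter.Eventually.of_forall fun x => sq_nonneg _)
  calc (1 / K 0) * ∫ x in B, K x ^ 2 ≤ (1 / K 0) * K 0 :=
        mul_le_mul_of_nonneg_left (hsub.trans main) (by positivity)
    _ = 1 := by field_simp
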